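/- Let K = 2, Σ a symmetric positive-definite 2×2 matrix, α₁, α₂ > 0, and set cov_i = α_i Σ_{ii} + α_j Σ_{ji} (j ≠ i), x_i = α_i det(Σ). Assume cov₁ + cov₂ ≥ 0 and cov₁ ≥ cov₂. Then for all t ≤ t₁* := (cov₁ − cov₂)/x₂, the unique minimizer of V(q₁,q₂) = αᵀ(Σ⁻¹ + diag(q))⁻¹α over {q ≥ 0 : q₁ + q₂ = t} is (t, 0). -/

import Mathlib

set_option maxHeartbeats 1600000

open Matrix

lemma aux_ineq (a b d A0 A1 t s : ℝ) (ha : 0 < a) (hd : 0 < d)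
    (hdel : 0 < a*d - b*b) (hA0 : 0 < A0) (hA1 : 0 < A1)
    (hs : 0 ≤ s) (hst : s ≤ t)
    (hsum : 0 ≤ (A0*a+A1*b)+(A1*d+A0*b))
    (ht : A1*(a*d-b*b)*t ≤ (A0*a+A1*b)-(A1*d+A0*b))
    (hquad : 0 < A0*(a*A0+b*A1)+A1*(b*A0+d*A1)) :
    (A0^2*a+2*A0*A1*b+A1^2*(d+(a*d-b*b)*t)) * ((d+(a*d-b*b)*s)*(a+(a*d-b*b)*(t-s)) - b*b)
      ≤ (A0^2*(a+(a*d-b*b)*(t-s))+2*A0*A1*b+A1^2*(d+(a*d-b*b)*s)) * ((d+(a*d-b*b)*t)*a - b*b)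
    ∧ ((A0^2*(a+(a*d-b*b)*(t-s))+2*A0*A1*b+A1^2*(d+(a*d-b*b)*s)) * ((d+(a*d-b*b)*t)*a - b*b)
      ≤ (A0^2*a+2*A0*A1*b+A1^2*(d+(a*d-b*b)*t)) * ((d+(a*d-b*b)*s)*(a+(a*d-b*b)*(t-s)) - b*b)
      → s = t) := by
  set Δ := a*d - b*b with hΔ
  have ht0 : 0 ≤ t := le_trans hs hst
  have hts : 0 ≤ t - s := by linarith
  have hu : 0 ≤ A1*Δ*t := mul_nonneg (mul_nonneg hA1.le hdel.le) ht0
  have hg : 0 ≤ ((A0*a+A1*b)-(A1*d+A0*b) - A1*Δ*t) * ((A0*a+A1*b)+(A1*d+A0*b) + A1*Δ*t) :=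
    mul_nonneg (by linarith) (by linarith)
  have hNt : 0 < A0^2*a+2*A0*A1*b+A1^2*(d+Δ*t) := by
    have h1 : 0 ≤ A1^2*Δ*t := mul_nonneg (mul_nonneg (sq_nonneg A1) hdel.le) ht0
    nlinarith [hquad]
  have hid : (A0^2*(a+Δ*(t-s))+2*A0*A1*b+A1^2*(d+Δ*s)) * ((d+Δ*t)*a - b*b)
      - (A0^2*a+2*A0*A1*b+A1^2*(d+Δ*t)) * ((d+Δ*s)*(a+Δ*(t-s)) - b*b)
      = Δ*(t-s)*(((A0*a+A1*b)-(A1*d+A0*b) - A1*Δ*t) * ((A0*a+A1*b)+(A1*d+A0*b) + A1*Δ*t))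
        + (A0^2*a+2*A0*A1*b+A1^2*(d+Δ*t))*Δ^2*(t-s)^2 := by
    rw [hΔ]; ring
  have h1 : 0 ≤ Δ*(t-s)*(((A0*a+A1*b)-(A1*d+A0*b) - A1*Δ*t) * ((A0*a+A1*b)+(A1*d+A0*b) + A1*Δ*t)) :=
    mul_nonneg (mul_nonneg hdel.le hts) hg
  have h2 : 0 ≤ (A0^2*a+2*A0*A1*b+A1^2*(d+Δ*t))*Δ^2*(t-s)^2 :=
    mul_nonneg (mul_nonneg hNt.le (sq_nonneg Δ)) (sq_nonneg _)
  constructor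
  · linarith
  · intro hle
    have h3 : (A0^2*a+2*A0*A1*b+A1^2*(d+Δ*t))*Δ^2*(t-s)^2 ≤ 0 := by linarith
    have hp : 0 < (A0^2*a+2*A0*A1*b+A1^2*(d+Δ*t))*Δ^2 := mul_pos hNt (pow_pos hdel 2)
    have h4 : (t-s)^2 ≤ 0 := by nlinarith
    have h5 : t - s = 0 := by nlinarith [sq_nonneg (t-s)]
    linarith

theorem stmt_12 (S : Matrix (Fin 2) (Fin 2) ℝ) (hS : S.PosDef)
    (α : Fin 2 → ℝ) (hα : ∀ i, 0 < α i)
    (cov1 cov2 : ℝ)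
    (hcov1 : cov1 = α 0 * S 0 0 + α 1 * S 1 0)
    (hcov2 : cov2 = α 1 * S 1 1 + α 0 * S 0 1)
    (hsum : 0 ≤ cov1 + cov2) (hord : cov2 ≤ cov1)
    (t : ℝ) (ht0 : 0 ≤ t) (ht : t ≤ (cov1 - cov2) / (α 1 * S.det)) :
    ∀ q : Fin 2 → ℝ, (∀ i, 0 ≤ q i) → q 0 + q 1 = t →
      α ⬝ᵥ ((S⁻¹ + diagonal ![t, 0])⁻¹ *ᵥ α) ≤ α ⬝ᵥ ((S⁻¹ + diagonal q)⁻¹ *ᵥ α) ∧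
      (α ⬝ᵥ ((S⁻¹ + diagonal q)⁻¹ *ᵥ α) ≤ α ⬝ᵥ ((S⁻¹ + diagonal ![t, 0])⁻¹ *ᵥ α) →
        q = ![t, 0]) := by
  intro q hq hqs
  subst hcov1 hcov2
  have hb : S 1 0 = S 0 1 := by
    have := congrFun (congrFun hS.1 0) 1
    simpa using this
  rw [hb] at hsum hord ht
  have quad : ∀ v : Fin 2 → ℝ, v ≠ 0 →
      0 < v 0*(S 0 0*v 0+S 0 1*v 1)+v 1*(S 1 0*v 0+S 1 1*v 1) := by
    intro v hv
    have := hS.dotProduct_mulVec_pos hv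
    simpa [dotProduct, mulVec, Fin.sum_univ_two] using this
  have ha : 0 < S 0 0 := by
    have h := quad ![1,0] (by intro h; simpa using congrFun h 0)
    simpa using h
  have hd : 0 < S 1 1 := by
    have h := quad ![0,1] (by intro h; simpa using congrFun h 1)
    simpa using h
  have hquad : 0 < α 0*(S 0 0*α 0+S 0 1*α 1)+α 1*(S 1 0*α 0+S 1 1*α 1) :=
    quad α (by intro h; exact absurd (congrFun h 0) (hα 0).ne')
  rw [hb] at hquad
  have hΔ : 0 < S.det := hS.det_pos
  have hdS : S.det = S 0 0 * S 1 1 - S 0 1 * S 0 1 := by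
    rw [Matrix.det_fin_two, hb]
  have hdel : 0 < S 0 0 * S 1 1 - S 0 1 * S 0 1 := hdS ▸ hΔ
  -- value formula
  have hval : ∀ r : Fin 2 → ℝ, 0 ≤ r 0 → 0 ≤ r 1 →
      0 < (S 1 1 + S.det*r 0)*(S 0 0 + S.det*r 1) - S 0 1*S 0 1 ∧
      α ⬝ᵥ ((S⁻¹ + diagonal r)⁻¹ *ᵥ α) =
        S.det * (α 0^2*(S 0 0+S.det*r 1) + 2*α 0*α 1*S 0 1 + α 1^2*(S 1 1 + S.det*r 0))
          / ((S 1 1 + S.det*r 0)*(S 0 0 + S.det*r 1) - S 0 1*S 0 1) := by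
    intro r hr0 hr1
    have hD : 0 < (S 1 1 + S.det*r 0)*(S 0 0 + S.det*r 1) - S 0 1*S 0 1 := by
      nlinarith [mul_nonneg (mul_nonneg hΔ.le hr0) (mul_nonneg hΔ.le hr1),
        mul_nonneg hd.le (mul_nonneg hΔ.le hr1), mul_nonneg ha.le (mul_nonneg hΔ.le hr0)]
    refine ⟨hD, ?_⟩
    have hA00 : (S⁻¹ + diagonal r) 0 0 = (S.det)⁻¹ * S 1 1 + r 0 := by
      rw [Matrix.inv_def, adjugate_fin_two, Ring.inverse_eq_inv']
      norm_num [Matrix.add_apply, Matrix.diagonal_apply]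
    have hA01 : (S⁻¹ + diagonal r) 0 1 = (S.det)⁻¹ * (-S 0 1) := by
      rw [Matrix.inv_def, adjugate_fin_two, Ring.inverse_eq_inv']
      norm_num [Matrix.add_apply, Matrix.diagonal_apply]
    have hA10 : (S⁻¹ + diagonal r) 1 0 = (S.det)⁻¹ * (-S 0 1) := by
      rw [Matrix.inv_def, adjugate_fin_two, Ring.inverse_eq_inv']
      norm_num [Matrix.add_apply, Matrix.diagonal_apply, hb]
    have hA11 : (S⁻¹ + diagonal r) 1 1 = (S.det)⁻¹ * S 0 0 + r 1 := by
      rw [Matrix.inv_def, adjugate_fin_two, Ring.inverse_eq_inv']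
      norm_num [Matrix.add_apply, Matrix.diagonal_apply]
    have hdetA : (S⁻¹ + diagonal r).det
        = ((S 1 1 + S.det*r 0)*(S 0 0 + S.det*r 1) - S 0 1*S 0 1) / S.det^2 := by
      rw [Matrix.det_fin_two, hA00, hA01, hA10, hA11]
      field_simp
    rw [Matrix.inv_def, Ring.inverse_eq_inv', hdetA, adjugate_fin_two,
      hA00, hA01, hA10, hA11]
    simp only [dotProduct, mulVec, Fin.sum_univ_two, Matrix.smul_apply,
      Matrix.cons_val', Matrix.cons_val_zero, Matrix.cons_val_one, Matrix.head_cons,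
      Matrix.head_fin_const, Matrix.empty_val', Matrix.cons_val_fin_one, Matrix.of_apply,
      smul_eq_mul]
    field_simp
    ring
  have hq1 : q 1 = t - q 0 := by linarith [hqs]
  have hvq := hval q (hq 0) (hq 1)
  have hvt := hval ![t,0] (by simpa using ht0) (by simp)
  have h0 : (![t,(0:ℝ)]) 0 = t := rfl
  have h1 : (![t,(0:ℝ)]) 1 = (0:ℝ) := rfl
  rw [h0, h1] at hvt
  rw [hq1] at hvq
  obtain ⟨hDq, hVq⟩ := hvq
  obtain ⟨hDt, hVt⟩ := hvt
  have hα1Δ : 0 < α 1 * S.det := mul_pos (hα 1) hΔ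
  have ht' : α 1 * (S 0 0 * S 1 1 - S 0 1 * S 0 1) * t
      ≤ (α 0 * S 0 0 + α 1 * S 0 1) - (α 1 * S 1 1 + α 0 * S 0 1) := by
    have := (le_div_iff₀ hα1Δ).mp ht
    rw [hdS] at this
    linarith
  have hst : q 0 ≤ t := by linarith [hq 1]
  have haux := aux_ineq (S 0 0) (S 0 1) (S 1 1) (α 0) (α 1) t (q 0) ha hd hdel
    (hα 0) (hα 1) (hq 0) hst (by linarith) ht' (by linarith)
  rw [← hdS] at haux
  rw [hVq, hVt]
  constructor
  · rw [div_le_div_iff₀ hDt hDq]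
    nlinarith [haux.1, hΔ, mul_pos hΔ hΔ]
  · intro hle
    rw [div_le_div_iff₀ hDq hDt] at hle
    have hq0t : q 0 = t := by
      apply haux.2
      nlinarith [hle, hΔ]
    funext i
    fin_cases i
    · simpa using hq0t
    · have : q 1 = 0 := by rw [hq1, hq0t]; ring
      simpa using this
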